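/- Let a, b, c, d be positive integers with a + b = c + d = n. Then ind((a,b), (c,d)) = gcd(a+b, b+c) − 1, where (a,b) and (c,d) are two-part compositions of n. -/

import Mathlib

open scoped Classical

/-- Vertices `j` and `k` of `{1,…,n}` (encoded as `Fin n`, vertex `v` is `v+1`) are joined by
an edge determined by the composition `a`. -/
def CompEdge {n : ℕ} (a : Composition n) (j k : Fin n) : Prop :=
  j ≠ k ∧ ∃ i : Fin a.length,
    a.sizeUpTo i < (j : ℕ) + 1 ∧ (j : ℕ) + 1 ≤ a.sizeUpTo (i + 1) ∧
    a.sizeUpTo i < (k : ℕ) + 1 ∧ (k : ℕ) + 1 ≤ a.sizeUpTo (i + 1) ∧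
    ((j : ℕ) + 1) + ((k : ℕ) + 1) = 2 * a.sizeUpTo i + a.blocksFun i + 1

lemma CompEdge.symm {n : ℕ} {a : Composition n} {j k : Fin n} (h : CompEdge a j k) :
    CompEdge a k j := by
  obtain ⟨hne, i, h1, h2, h3, h4, h5⟩ := h
  exact ⟨hne.symm, i, h3, h4, h1, h2, by omega⟩

/-- The meander `M(a|b)` of the pair of compositions `(a, b)` of `n`. -/
def Meander {n : ℕ} (a b : Composition n) : SimpleGraph (Fin n) where
  Adj j k := CompEdge a j k ∨ CompEdge b j k
  symm := by
    constructor
    intro j k h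
    rcases h with h | h
    · exact Or.inl h.symm
    · exact Or.inr h.symm
  loopless := by
    constructor
    intro j h
    rcases h with ⟨hne, _⟩ | ⟨hne, _⟩ <;> exact hne rfl

/-- A connected component of the meander is a cycle if each of its vertices is incident
to both a top edge and a bottom edge. -/
def IsCycleComp {n : ℕ} (a b : Composition n) (c : (Meander a b).ConnectedComponent) : Prop :=
  ∀ v : Fin n, (Meander a b).connectedComponentMk v = c →
    (∃ w, CompEdge a v w) ∧ (∃ w, CompEdge b v w)

/-- The number of cycle components of the meander `M(a|b)`. -/
noncomputable def cycleCount {n : ℕ} (a b : Composition n) : ℕ :=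
  Nat.card {c : (Meander a b).ConnectedComponent // IsCycleComp a b c}

/-- The number of path components of the meander `M(a|b)`. -/
noncomputable def pathCount {n : ℕ} (a b : Composition n) : ℕ :=
  Nat.card {c : (Meander a b).ConnectedComponent // ¬ IsCycleComp a b c}

/-- The index `ind(a,b) = 2C + P - 1` of a pair of compositions of `n`. -/
noncomputable def seaweedInd {n : ℕ} (a b : Composition n) : ℕ :=
  2 * cycleCount a b + pathCount a b - 1

/-- `C(n,k)`: the number of ordered pairs of compositions of `n` of index `k`. -/
noncomputable def Cnk (n k : ℕ) : ℕ :=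
  Nat.card {p : Composition n × Composition n // seaweedInd p.1 p.2 = k}

/-- The composition of `n` with the given list of positive parts. -/
def compOfList (n : ℕ) (l : List ℕ) (hpos : ∀ x ∈ l, 0 < x) (hsum : l.sum = n) :
    Composition n :=
  ⟨l, fun hi => hpos _ hi, hsum⟩

lemma int_eq_zero_of_dvd_of_lt {N z : ℤ} (h : N ∣ z) (h2 : |z| < N) : z = 0 := by
  by_contra hz
  exact absurd (Int.le_of_dvd (abs_pos.mpr hz) ((dvd_abs N z).mpr h)) (not_le.mpr h2)

lemma compOfList_sizeUpTo_zero {n a b : ℕ} (hpos : ∀ x ∈ [a,b], 0 < x) (hsum : [a,b].sum = n) :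
    (compOfList n [a,b] hpos hsum).sizeUpTo 0 = 0 := by
  simp [Composition.sizeUpTo, compOfList]

lemma compOfList_sizeUpTo_one {n a b : ℕ} (hpos : ∀ x ∈ [a,b], 0 < x) (hsum : [a,b].sum = n) :
    (compOfList n [a,b] hpos hsum).sizeUpTo 1 = a := by
  simp [Composition.sizeUpTo, compOfList]

lemma compOfList_sizeUpTo_two {n a b : ℕ} (hpos : ∀ x ∈ [a,b], 0 < x) (hsum : [a,b].sum = n) :
    (compOfList n [a,b] hpos hsum).sizeUpTo 2 = a + b := by
  simp [Composition.sizeUpTo, compOfList]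

lemma compOfList_length {n a b : ℕ} (hpos : ∀ x ∈ [a,b], 0 < x) (hsum : [a,b].sum = n) :
    (compOfList n [a,b] hpos hsum).length = 2 := rfl

lemma compEdge_two_iff {n a b : ℕ} (hb : 0 < b) (hab : a + b = n)
    (hpos : ∀ x ∈ [a,b], 0 < x) (hsum : [a,b].sum = n) (j k : Fin n) :
    CompEdge (compOfList n [a,b] hpos hsum) j k ↔
      j ≠ k ∧ ((j:ℕ) + 1 + ((k:ℕ) + 1) = a + 1 ∨ (j:ℕ) + 1 + ((k:ℕ) + 1) = n + a + 1) := by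
  have hj := j.isLt
  have hk := k.isLt
  constructor
  · rintro ⟨hne, i, h1, h2, h3, h4, h5⟩
    refine ⟨hne, ?_⟩
    have hi2 : (i : ℕ) < 2 := i.isLt
    interval_cases hiv : (i : ℕ)
    · have hbf : (compOfList n [a,b] hpos hsum).blocksFun i = a := by
        rcases i with ⟨iv, hlt⟩
        simp only [Fin.val_mk] at hiv
        subst hiv
        rfl
      rw [compOfList_sizeUpTo_zero, hbf] at h5
      left; omega
    · have hbf : (compOfList n [a,b] hpos hsum).blocksFun i = b := by
        rcases i with ⟨iv, hlt⟩
        simp only [Fin.val_mk] at hiv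
        subst hiv
        rfl
      rw [compOfList_sizeUpTo_one, hbf] at h5
      right; omega
  · rintro ⟨hne, h | h⟩
    · refine ⟨hne, ⟨0, by rw [compOfList_length hpos hsum]; omega⟩, ?_, ?_, ?_, ?_, ?_⟩
      · show (compOfList n [a,b] hpos hsum).sizeUpTo 0 < (j:ℕ) + 1
        rw [compOfList_sizeUpTo_zero]; omega
      · show (j:ℕ) + 1 ≤ (compOfList n [a,b] hpos hsum).sizeUpTo 1
        rw [compOfList_sizeUpTo_one]; omega
      · show (compOfList n [a,b] hpos hsum).sizeUpTo 0 < (k:ℕ) + 1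
        rw [compOfList_sizeUpTo_zero]; omega
      · show (k:ℕ) + 1 ≤ (compOfList n [a,b] hpos hsum).sizeUpTo 1
        rw [compOfList_sizeUpTo_one]; omega
      · show (j:ℕ) + 1 + ((k:ℕ) + 1) =
          2 * (compOfList n [a,b] hpos hsum).sizeUpTo 0 + a + 1
        rw [compOfList_sizeUpTo_zero]; omega
    · refine ⟨hne, ⟨1, by rw [compOfList_length hpos hsum]; omega⟩, ?_, ?_, ?_, ?_, ?_⟩
      · show (compOfList n [a,b] hpos hsum).sizeUpTo 1 < (j:ℕ) + 1
        rw [compOfList_sizeUpTo_one]; omega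
      · show (j:ℕ) + 1 ≤ (compOfList n [a,b] hpos hsum).sizeUpTo 2
        rw [compOfList_sizeUpTo_two]; omega
      · show (compOfList n [a,b] hpos hsum).sizeUpTo 1 < (k:ℕ) + 1
        rw [compOfList_sizeUpTo_one]; omega
      · show (k:ℕ) + 1 ≤ (compOfList n [a,b] hpos hsum).sizeUpTo 2
        rw [compOfList_sizeUpTo_two]; omega
      · show (j:ℕ) + 1 + ((k:ℕ) + 1) =
          2 * (compOfList n [a,b] hpos hsum).sizeUpTo 1 + b + 1
        rw [compOfList_sizeUpTo_one]; omega

lemma compEdge_two_iff_zmod {n a b : ℕ} (ha : 0 < a) (hb : 0 < b) (hab : a + b = n)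
    (hpos : ∀ x ∈ [a,b], 0 < x) (hsum : [a,b].sum = n) (j k : Fin n) :
    CompEdge (compOfList n [a,b] hpos hsum) j k ↔
      j ≠ k ∧ (((j:ℕ) + 1 : ℕ) : ZMod n) + (((k:ℕ) + 1 : ℕ) : ZMod n)
        = ((a + 1 : ℕ) : ZMod n) := by
  rw [compEdge_two_iff hb hab]
  have hj := j.isLt
  have hk := k.isLt
  constructor
  · rintro ⟨hne, h | h⟩ <;> refine ⟨hne, ?_⟩
    · rw [← Nat.cast_add, h]
    · rw [← Nat.cast_add, h]
      push_cast
      rw [ZMod.natCast_self]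
      ring
  · rintro ⟨hne, h⟩
    refine ⟨hne, ?_⟩
    rw [← Nat.cast_add, ZMod.natCast_eq_natCast_iff] at h
    have h2 := (Nat.modEq_iff_dvd).mp h
    obtain ⟨t, ht⟩ := h2
    push_cast at ht
    have hvne : (j:ℕ) ≠ (k:ℕ) := fun hh => hne (Fin.ext hh)
    have hjk : (1:ℤ) ≤ (j:ℕ) + (k:ℕ) := by
      have : 1 ≤ (j:ℕ) + (k:ℕ) := by omega
      exact_mod_cast this
    have hjz : ((j:ℕ):ℤ) < n := by exact_mod_cast hj
    have hkz : ((k:ℕ):ℤ) < n := by exact_mod_cast hk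
    have haz : (a:ℤ) + 1 ≤ n := by
      have : a + 1 ≤ n := by omega
      exact_mod_cast this
    have haz1 : (1:ℤ) ≤ a := by exact_mod_cast ha
    have hnz : (0:ℤ) < n := by
      have : 0 < n := by omega
      exact_mod_cast this
    have ht' : t = 0 ∨ t = -1 := by
      by_contra hcon
      push_neg at hcon
      have hcase : t ≤ -2 ∨ 1 ≤ t := by omega
      rcases hcase with h' | h'
      · have hm : (n:ℤ) * t ≤ (n:ℤ) * (-2) :=
          mul_le_mul_of_nonneg_left h' (le_of_lt hnz)
        linarith
      · have hm : (n:ℤ) * 1 ≤ (n:ℤ) * t :=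
          mul_le_mul_of_nonneg_left h' (le_of_lt hnz)
        linarith
    rcases ht' with rfl | rfl
    · left; omega
    · right; omega

lemma meander_two_two (n a b c d : ℕ) (ha : 0 < a) (hb : 0 < b) (hc : 0 < c) (hd : 0 < d)
    (hab : a + b = n) (hcd : c + d = n)
    (hposA : ∀ x ∈ [a,b], 0 < x) (hsumA : [a,b].sum = n)
    (hposB : ∀ x ∈ [c,d], 0 < x) (hsumB : [c,d].sum = n) :
    2 * Nat.card {q : (Meander (compOfList n [a,b] hposA hsumA) (compOfList n [c,d] hposB hsumB)).ConnectedComponent //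
        IsCycleComp (compOfList n [a,b] hposA hsumA) (compOfList n [c,d] hposB hsumB) q}
      + Nat.card {q : (Meander (compOfList n [a,b] hposA hsumA) (compOfList n [c,d] hposB hsumB)).ConnectedComponent //
        ¬ IsCycleComp (compOfList n [a,b] hposA hsumA) (compOfList n [c,d] hposB hsumB) q}
      = Nat.gcd n (b + c) := by
  set A := compOfList n [a,b] hposA hsumA with hA
  set B := compOfList n [c,d] hposB hsumB with hB
  set G := Meander A B with hG
  have hn : 0 < n := by omega
  haveI : NeZero n := ⟨hn.ne'⟩
  set g := Nat.gcd n (b + c) with hg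
  have hgpos : 0 < g := Nat.gcd_pos_of_pos_left _ hn
  haveI : NeZero g := ⟨hgpos.ne'⟩
  have hgn : g ∣ n := Nat.gcd_dvd_left _ _
  have hgbc : g ∣ (b + c) := Nat.gcd_dvd_right _ _
  set π : ZMod n →+* ZMod g := ZMod.castHom hgn (ZMod g) with hπ
  set e : Fin n → ZMod n := fun v => (((v : ℕ) + 1 : ℕ) : ZMod n) with he
  set α : ZMod n := ((a + 1 : ℕ) : ZMod n) with hα
  set β : ZMod n := ((c + 1 : ℕ) : ZMod n) with hβ
  set δ : ZMod n := ((b + c : ℕ) : ZMod n) with hδ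
  set ᾱ : ZMod g := ((a + 1 : ℕ) : ZMod g) with hᾱ
  -- basic facts
  have h_e_inj : Function.Injective e := by
    intro v w h
    have hv := v.isLt
    have hw := w.isLt
    rw [he] at h
    rw [ZMod.natCast_eq_natCast_iff] at h
    have h2 := (Nat.modEq_iff_dvd).mp h
    have h3 : ((w:ℕ):ℤ) - ((v:ℕ):ℤ) = 0 := by
      apply int_eq_zero_of_dvd_of_lt (N := (n:ℤ))
      · have heq : ((w:ℕ):ℤ) - ((v:ℕ):ℤ) = (((w:ℕ) + 1 : ℕ):ℤ) - (((v:ℕ) + 1 : ℕ):ℤ) := by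
          push_cast; ring
        rw [heq]; exact h2
      · rw [abs_lt]
        constructor <;> omega
    have : (v:ℕ) = (w:ℕ) := by omega
    exact Fin.ext this
  have h_e_bij : Function.Bijective e := by
    rw [Fintype.bijective_iff_injective_and_card]
    exact ⟨h_e_inj, by simp [ZMod.card]⟩
  set E : Fin n ≃ ZMod n := Equiv.ofBijective e h_e_bij with hE
  have hEapp : ∀ x : ZMod n, e (E.symm x) = x := fun x => E.apply_symm_apply x
  have hAiff : ∀ j k : Fin n, CompEdge A j k ↔ j ≠ k ∧ e j + e k = α :=
    fun j k => compEdge_two_iff_zmod ha hb hab hposA hsumA j k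
  have hBiff : ∀ j k : Fin n, CompEdge B j k ↔ j ≠ k ∧ e j + e k = β :=
    fun j k => compEdge_two_iff_zmod hc hd hcd hposB hsumB j k
  have hδβα : β - α = δ := by
    have h1 : ((a + b : ℕ) : ZMod n) = 0 := by rw [hab]; exact ZMod.natCast_self n
    rw [hβ, hα, hδ]
    push_cast at h1 ⊢
    linear_combination -h1
  have hπα : π α = ᾱ := map_natCast π _
  have hπδ : π δ = 0 := by
    rw [hδ, map_natCast π]
    exact (ZMod.natCast_eq_zero_iff _ _).mpr hgbc
  have hπβ : π β = ᾱ := by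
    have h1 : π β - π α = 0 := by rw [← map_sub, hδβα]; exact hπδ
    rw [← hπα]
    linear_combination h1
  have hker : ∀ z : ZMod n, π z = 0 → ∃ k : ℤ, z = (k : ZMod n) * δ := by
    intro z hz
    have hzval : ((z.val : ℕ) : ZMod n) = z := ZMod.natCast_rightInverse z
    have h1 : ((z.val : ℕ) : ZMod g) = 0 := by
      rw [← map_natCast π, hzval]; exact hz
    obtain ⟨t, ht⟩ := (ZMod.natCast_eq_zero_iff _ _).mp h1
    have hbez := Nat.gcd_eq_gcd_ab n (b + c)
    refine ⟨Nat.gcdB n (b + c) * t, ?_⟩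
    have hgz : ((g : ℕ) : ZMod n) = ((Nat.gcdB n (b + c) : ℤ) : ZMod n) * δ := by
      have h3 : (((Nat.gcd n (b+c) : ℕ) : ℤ) : ZMod n)
          = (((n : ℤ) * Nat.gcdA n (b+c) + ((b+c : ℕ) : ℤ) * Nat.gcdB n (b+c) : ℤ) : ZMod n) := by
        exact congrArg (fun z : ℤ => (z : ZMod n)) hbez
      have h4 : ((n : ℕ) : ZMod n) = 0 := ZMod.natCast_self n
      rw [hg, hδ]
      push_cast at h3 h4 ⊢
      rw [h3, h4]
      ring
    calc z = ((g * t : ℕ) : ZMod n) := by rw [← ht, hzval]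
      _ = ((t : ℕ) : ZMod n) * ((g : ℕ) : ZMod n) := by push_cast; ring
      _ = ((Nat.gcdB n (b + c) * t : ℤ) : ZMod n) * δ := by
          rw [hgz]; push_cast; ring
  -- reachability
  have reach_sum_α : ∀ v w : Fin n, e v + e w = α → G.Reachable v w := by
    intro v w h
    by_cases hvw : v = w
    · subst hvw; exact ⟨SimpleGraph.Walk.nil⟩
    · have hadj : G.Adj v w := Or.inl ((hAiff v w).mpr ⟨hvw, h⟩)
      exact hadj.reachable
  have reach_sum_β : ∀ v w : Fin n, e v + e w = β → G.Reachable v w := by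
    intro v w h
    by_cases hvw : v = w
    · subst hvw; exact ⟨SimpleGraph.Walk.nil⟩
    · have hadj : G.Adj v w := Or.inr ((hBiff v w).mpr ⟨hvw, h⟩)
      exact hadj.reachable
  have reach_delta : ∀ v w : Fin n, e w = e v + δ → G.Reachable v w := by
    intro v w h
    have hu : e (E.symm (α - e v)) = α - e v := hEapp _
    have r1 : G.Reachable v (E.symm (α - e v)) := reach_sum_α _ _ (by rw [hu]; ring)
    have r2 : G.Reachable (E.symm (α - e v)) w := reach_sum_β _ _ (by
      rw [hu, h]
      linear_combination -hδβα)
    exact r1.trans r2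
  have reach_kdelta : ∀ (k : ℤ) (v w : Fin n), e w = e v + (k : ZMod n) * δ →
      G.Reachable v w := by
    intro k
    induction k using Int.induction_on with
    | zero =>
      intro v w h
      have : e w = e v := by rw [h]; push_cast; ring
      obtain rfl := h_e_inj this
      exact ⟨SimpleGraph.Walk.nil⟩
    | succ k ih =>
      intro v w h
      have hu : e (E.symm (e v + ((k : ℤ) : ZMod n) * δ)) = e v + ((k : ℤ) : ZMod n) * δ :=
        hEapp _
      have r1 := ih v _ hu
      have r2 : G.Reachable (E.symm (e v + ((k : ℤ) : ZMod n) * δ)) w := reach_delta _ _ (by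
        rw [h, hu]; push_cast; ring)
      exact r1.trans r2
    | pred k ih =>
      intro v w h
      have hu : e (E.symm (e v + ((-(k:ℤ) : ℤ) : ZMod n) * δ)) = e v + ((-(k:ℤ) : ℤ) : ZMod n) * δ :=
        hEapp _
      have r1 := ih v _ hu
      have r2 : G.Reachable w (E.symm (e v + ((-(k:ℤ) : ℤ) : ZMod n) * δ)) := reach_delta _ _ (by
        rw [h, hu]; push_cast; ring)
      exact r1.trans r2.symm
  set f : Fin n → ZMod g := fun v => π (e v) with hf
  set Srel : ZMod g → ZMod g → Prop := fun x y => y = x ∨ x + y = ᾱ with hS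
  have srel_trans : ∀ {x y z : ZMod g}, Srel x y → Srel y z → Srel x z := by
    intro x y z h1 h2
    rcases h1 with rfl | h1
    · exact h2
    · rcases h2 with rfl | h2
      · exact Or.inr h1
      · left
        linear_combination h2 - h1
  have adj_srel : ∀ v w : Fin n, G.Adj v w → Srel (f v) (f w) := by
    intro v w h
    have h' : CompEdge A v w ∨ CompEdge B v w := h
    rcases h' with h' | h'
    · right
      have h2 := ((hAiff v w).mp h').2
      have h3 : π (e v + e w) = π α := by rw [h2]
      rw [map_add, hπα] at h3
      exact h3
    · right
      have h2 := ((hBiff v w).mp h').2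
      have h3 : π (e v + e w) = π β := by rw [h2]
      rw [map_add, hπβ] at h3
      exact h3
  have reach_srel : ∀ v w : Fin n, G.Reachable v w → Srel (f v) (f w) := by
    intro v w h
    obtain ⟨p⟩ := h
    induction p with
    | nil => exact Or.inl rfl
    | cons hadj p ih => exact srel_trans (adj_srel _ _ hadj) ih
  have case1 : ∀ v w : Fin n, f w = f v → G.Reachable v w := by
    intro v w h
    have h0 : π (e w - e v) = 0 := by
      rw [map_sub]
      rw [hf] at h
      simp only at h
      rw [h]
      ring
    obtain ⟨k, hk⟩ := hker _ h0
    exact reach_kdelta k v w (by linear_combination hk)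
  have srel_reach : ∀ v w : Fin n, Srel (f v) (f w) → G.Reachable v w := by
    intro v w h
    rcases h with h | h
    · exact case1 v w h
    · have hu : e (E.symm (α - e v)) = α - e v := hEapp _
      have r1 : G.Reachable v (E.symm (α - e v)) := reach_sum_α _ _ (by rw [hu]; ring)
      have r2 : f (E.symm (α - e v)) = ᾱ - f v := by
        show π (e (E.symm (α - e v))) = ᾱ - π (e v)
        rw [hu, map_sub, hπα]
      have h3 : f w = f (E.symm (α - e v)) := by
        rw [r2]
        linear_combination h
      exact r1.trans (case1 _ w h3)
  -- edges at a vertex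
  have top_iff : ∀ v : Fin n, (∃ w, CompEdge A v w) ↔ e v + e v ≠ α := by
    intro v
    constructor
    · rintro ⟨w, hw⟩ hcon
      obtain ⟨hne, hsum⟩ := (hAiff v w).mp hw
      exact hne (h_e_inj (by linear_combination hsum - hcon)).symm
    · intro h
      refine ⟨E.symm (α - e v), (hAiff _ _).mpr ⟨?_, ?_⟩⟩
      · intro hcon
        apply h
        have h2 : e v = α - e v := by
          conv_lhs => rw [hcon]
          exact hEapp _
        linear_combination h2
      · rw [hEapp]; ring
  have bot_iff : ∀ v : Fin n, (∃ w, CompEdge B v w) ↔ e v + e v ≠ β := by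
    intro v
    constructor
    · rintro ⟨w, hw⟩ hcon
      obtain ⟨hne, hsum⟩ := (hBiff v w).mp hw
      exact hne (h_e_inj (by linear_combination hsum - hcon)).symm
    · intro h
      refine ⟨E.symm (β - e v), (hBiff _ _).mpr ⟨?_, ?_⟩⟩
      · intro hcon
        apply h
        have h2 : e v = β - e v := by
          conv_lhs => rw [hcon]
          exact hEapp _
        linear_combination h2
      · rw [hEapp]; ring
  have crux : ∀ m : ZMod g, m + m = ᾱ →
      ∃ v : Fin n, f v = m ∧ (e v + e v = α ∨ e v + e v = β) := by
    intro m hm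
    obtain ⟨x, hx⟩ : ∃ x : ZMod n, π x = m :=
      ⟨((m.val : ℕ) : ZMod n), by rw [map_natCast]; exact ZMod.natCast_rightInverse m⟩
    have h0 : π (x + x - α) = 0 := by
      rw [map_sub, map_add, hx, hπα, hm]
      ring
    obtain ⟨k, hk⟩ := hker _ h0
    have hπy : ∀ t : ℤ, π (x - (t : ZMod n) * δ) = m := by
      intro t
      rw [map_sub, map_mul, map_intCast, hπδ, hx]
      ring
    rcases Int.even_or_odd k with ⟨t, ht⟩ | ⟨t, ht⟩
    · refine ⟨E.symm (x - (t : ZMod n) * δ), ?_, Or.inl ?_⟩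
      · show π (e (E.symm (x - (t : ZMod n) * δ))) = m
        rw [hEapp]
        exact hπy t
      · rw [hEapp]
        subst ht
        push_cast at hk
        linear_combination hk
    · refine ⟨E.symm (x - (t : ZMod n) * δ), ?_, Or.inr ?_⟩
      · show π (e (E.symm (x - (t : ZMod n) * δ))) = m
        rw [hEapp]
        exact hπy t
      · rw [hEapp]
        subst ht
        push_cast at hk
        linear_combination hk - hδβα
  have cyc_iff : ∀ v : Fin n,
      IsCycleComp A B (G.connectedComponentMk v) ↔ ¬ (f v + f v = ᾱ) := by
    intro v
    constructor
    · intro hcyc hfix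
      obtain ⟨w, hfw, hw⟩ := crux (f v) hfix
      have hmk : G.connectedComponentMk w = G.connectedComponentMk v :=
        SimpleGraph.ConnectedComponent.sound (srel_reach w v (Or.inl hfw.symm))
      obtain ⟨ht, hbm⟩ := hcyc w hmk
      rcases hw with h' | h'
      · exact (top_iff w).mp ht h'
      · exact (bot_iff w).mp hbm h'
    · intro hfix w hmk
      have hr : G.Reachable w v := SimpleGraph.ConnectedComponent.exact hmk
      have hs := reach_srel w v hr
      constructor
      · refine (top_iff w).mpr ?_
        intro hcon
        have h1 : f w + f w = ᾱ := by
          have h2 : π (e w + e w) = π α := by rw [hcon]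
          rw [map_add, hπα] at h2
          exact h2
        rcases hs with h' | h'
        · exact hfix (by rw [h']; exact h1)
        · exact hfix (by linear_combination 2 * h' - h1)
      · refine (bot_iff w).mpr ?_
        intro hcon
        have h1 : f w + f w = ᾱ := by
          have h2 : π (e w + e w) = π β := by rw [hcon]
          rw [map_add, hπβ] at h2
          exact h2
        rcases hs with h' | h'
        · exact hfix (by rw [h']; exact h1)
        · exact hfix (by linear_combination 2 * h' - h1)
  -- the quotient
  have hequiv : Equivalence Srel := by
    refine ⟨fun x => Or.inl rfl, ?_, fun h1 h2 => srel_trans h1 h2⟩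
    intro x y h
    rcases h with rfl | h
    · exact Or.inl rfl
    · right
      linear_combination h
  letI s : Setoid (ZMod g) := ⟨Srel, hequiv⟩
  have hfsurj : Function.Surjective f := by
    intro m
    refine ⟨E.symm ((m.val : ℕ) : ZMod n), ?_⟩
    show π (e (E.symm ((m.val : ℕ) : ZMod n))) = m
    rw [hEapp, map_natCast]
    exact ZMod.natCast_rightInverse m
  set sec : ZMod g → Fin n := Function.surjInv hfsurj with hsec0
  have hsec : ∀ m, f (sec m) = m := fun m => Function.surjInv_eq hfsurj m
  set Φ : G.ConnectedComponent ≃ Quotient s :=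
    { toFun := Quot.lift (fun v => Quotient.mk s (f v))
        (fun v w h => Quotient.sound (reach_srel v w h))
      invFun := Quotient.lift (fun m => G.connectedComponentMk (sec m))
        (fun m m' h => SimpleGraph.ConnectedComponent.sound
          (srel_reach _ _ (by rw [hsec, hsec]; exact h)))
      left_inv := by
        refine SimpleGraph.ConnectedComponent.ind ?_
        intro v
        exact SimpleGraph.ConnectedComponent.sound
          (srel_reach _ _ (by rw [hsec]; exact Or.inl rfl))
      right_inv := by
        refine Quotient.ind ?_
        intro m
        exact congrArg (Quotient.mk s) (hsec m) } with hΦ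
  set Fix : Quotient s → Prop := Quotient.lift (fun m : ZMod g => m + m = ᾱ)
    (by
      intro m m' h
      rcases h with rfl | h
      · rfl
      · apply propext
        constructor
        · intro h1
          linear_combination 2 * h - h1
        · intro h1
          linear_combination 2 * h - h1) with hFix
  haveI : Fintype (Quotient s) := Fintype.ofFinite _
  have fiber_card : ∀ q : Quotient s,
      (Finset.univ.filter fun m : ZMod g => Quotient.mk s m = q).card
        = if Fix q then 1 else 2 := by
    refine Quotient.ind ?_
    intro m
    have hq : ∀ m' : ZMod g, (Quotient.mk s m' = Quotient.mk s m) ↔ (m = m' ∨ m' + m = ᾱ) :=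
      fun m' => ⟨fun h => Quotient.exact h, fun h => Quotient.sound h⟩
    have hFixm : Fix (Quotient.mk s m) ↔ m + m = ᾱ := Iff.rfl
    by_cases hfix : m + m = ᾱ
    · rw [if_pos (hFixm.mpr hfix)]
      have hset : (Finset.univ.filter fun m' : ZMod g => Quotient.mk s m' = Quotient.mk s m)
          = {m} := by
        ext m'
        simp only [Finset.mem_filter, Finset.mem_univ, true_and, Finset.mem_singleton, hq m']
        constructor
        · rintro (rfl | h)
          · rfl
          · linear_combination h - hfix
        · rintro rfl
          exact Or.inl rfl
      rw [hset, Finset.card_singleton]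
    · rw [if_neg (fun hcon => hfix (hFixm.mp hcon))]
      have hset : (Finset.univ.filter fun m' : ZMod g => Quotient.mk s m' = Quotient.mk s m)
          = {m, ᾱ - m} := by
        ext m'
        simp only [Finset.mem_filter, Finset.mem_univ, true_and, Finset.mem_insert,
          Finset.mem_singleton, hq m']
        constructor
        · rintro (rfl | h)
          · exact Or.inl rfl
          · right
            linear_combination h
        · rintro (rfl | rfl)
          · exact Or.inl rfl
          · right
            ring
      rw [hset]
      rw [Finset.card_insert_of_notMem, Finset.card_singleton]
      intro hcon
      rw [Finset.mem_singleton] at hcon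
      exact hfix (by linear_combination hcon)
  have htotal : g = ∑ q : Quotient s,
      (Finset.univ.filter fun m : ZMod g => Quotient.mk s m = q).card := by
    have h1 := Finset.card_eq_sum_card_fiberwise
      (f := fun m : ZMod g => Quotient.mk s m) (s := Finset.univ) (t := Finset.univ)
      (fun m _ => Finset.mem_univ _)
    rw [Finset.card_univ, ZMod.card] at h1
    exact h1
  have hsplit : ∑ q : Quotient s, (if Fix q then (1:ℕ) else 2)
      = Nat.card {q : Quotient s // Fix q} + 2 * Nat.card {q : Quotient s // ¬ Fix q} := by
    rw [Finset.sum_ite]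
    simp only [Finset.sum_const, smul_eq_mul, mul_one]
    rw [Nat.card_eq_fintype_card, Nat.card_eq_fintype_card,
      Fintype.card_subtype, Fintype.card_subtype]
    ring
  have hΦmk : ∀ v : Fin n, Φ (G.connectedComponentMk v) = Quotient.mk s (f v) :=
    fun _ => rfl
  have hiff : ∀ q : G.ConnectedComponent, IsCycleComp A B q ↔ ¬ Fix (Φ q) := by
    refine SimpleGraph.ConnectedComponent.ind ?_
    intro v
    rw [hΦmk v]
    exact cyc_iff v
  have hCeq : Nat.card {q : G.ConnectedComponent // IsCycleComp A B q}
      = Nat.card {q : Quotient s // ¬ Fix q} := by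
    exact Nat.card_congr (Equiv.subtypeEquiv Φ hiff)
  have hPeq : Nat.card {q : G.ConnectedComponent // ¬ IsCycleComp A B q}
      = Nat.card {q : Quotient s // Fix q} := by
    refine Nat.card_congr (Equiv.subtypeEquiv Φ ?_)
    intro q
    rw [hiff q]
    exact not_not
  rw [hCeq, hPeq]
  have : ∑ q : Quotient s, (if Fix q then (1:ℕ) else 2)
      = ∑ q : Quotient s, (Finset.univ.filter fun m : ZMod g => Quotient.mk s m = q).card := by
    exact Finset.sum_congr rfl fun q _ => (fiber_card q).symm
  omega

theorem index_two_by_two (n a b c d : ℕ) (ha : 0 < a) (hb : 0 < b) (hc : 0 < c) (hd : 0 < d)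
    (hab : a + b = n) (hcd : c + d = n) :
    seaweedInd
      (compOfList n [a, b]
        (by intro x hx; rcases List.mem_pair.mp hx with rfl | rfl <;> assumption)
        (by simp [hab]))
      (compOfList n [c, d]
        (by intro x hx; rcases List.mem_pair.mp hx with rfl | rfl <;> assumption)
        (by simp [hcd])) =
    Nat.gcd (a + b) (b + c) - 1 := by
  have key := meander_two_two n a b c d ha hb hc hd hab hcd
    (by intro x hx; rcases List.mem_pair.mp hx with rfl | rfl <;> assumption)
    (by simp [hab])
    (by intro x hx; rcases List.mem_pair.mp hx with rfl | rfl <;> assumption)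
    (by simp [hcd])
  have hgcd : Nat.gcd (a + b) (b + c) = Nat.gcd n (b + c) := by rw [hab]
  rw [hgcd]
  unfold seaweedInd cycleCount pathCount
  rw [key]
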